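/- Let A be an ordered alphabet. The monoid F°(A*) of non-empty final segments of A* under concatenation is a free monoid. -/

import Mathlib

/-- The Higman (subword) ordering on words over an ordered alphabet `A`. -/
def Hig {A : Type*} [PartialOrder A] (u v : List A) : Prop :=
  List.SublistForall₂ (· ≤ ·) u v

/-- Elementwise concatenation of languages. -/
def conc {A : Type*} (X Y : Set (List A)) : Set (List A) :=
  Set.image2 (· ++ ·) X Y

/-- A final segment (upward closed set) of `A*` for the Higman ordering. -/
def IsFinal {A : Type*} [PartialOrder A] (F : Set (List A)) : Prop :=
  ∀ ⦃a b : List A⦄, Hig a b → a ∈ F → b ∈ F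

/-- Upward closure of a set of words. -/
def upset {A : Type*} [PartialOrder A] (X : Set (List A)) : Set (List A) :=
  {b | ∃ a ∈ X, Hig a b}

/-- The set of minimal elements of a set of words. -/
def minSet {A : Type*} [PartialOrder A] (X : Set (List A)) : Set (List A) :=
  {x | x ∈ X ∧ ∀ y ∈ X, Hig y x → y = x}

/-- An antichain of words for the Higman ordering. -/
def IsAnti {A : Type*} [PartialOrder A] (U : Set (List A)) : Prop :=
  ∀ x ∈ U, ∀ y ∈ U, x ≠ y → ¬ Hig x y

/-- An irreducible member of the monoid of final segments: distinct from `A*` and not a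
concatenation of two final segments distinct from itself. -/
def IrredFinal {A : Type*} [PartialOrder A] (G : Set (List A)) : Prop :=
  G ≠ Set.univ ∧
    ∀ X Y : Set (List A), IsFinal X → IsFinal Y → G = conc X Y → G = X ∨ G = Y

section Aux

variable {A : Type*} [PartialOrder A]

lemma hig_nil (u : List A) : Hig [] u := List.SublistForall₂.nil

lemma hig_suffix (a b : List A) : Hig b (a ++ b) :=
  (List.sublist_append_right a b).sublistForall₂

lemma hig_prefix (a b : List A) : Hig a (a ++ b) :=
  (List.sublist_append_left a b).sublistForall₂

lemma hig_refl (a : List A) : Hig a a := List.Sublist.sublistForall₂ (List.Sublist.refl a)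

lemma forall2_split {R : A → A → Prop} :
    ∀ {z t l : List A}, List.Forall₂ R (z ++ t) l →
      ∃ m₁ m₂, l = m₁ ++ m₂ ∧ List.Forall₂ R z m₁ ∧ List.Forall₂ R t m₂ := by
  intro z
  induction z with
  | nil => intro t l h; exact ⟨[], l, rfl, List.Forall₂.nil, h⟩
  | cons a z ih =>
    intro t l h
    cases h with
    | cons hab h' =>
      obtain ⟨m₁, m₂, rfl, h1, h2⟩ := ih h'
      exact ⟨_ :: m₁, m₂, rfl, List.Forall₂.cons hab h1, h2⟩

lemma hig_split {z t v : List A} (h : Hig (z ++ t) v) :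
    ∃ v₁ v₂, v = v₁ ++ v₂ ∧ Hig z v₁ ∧ Hig t v₂ := by
  rw [Hig, List.sublistForall₂_iff] at h
  obtain ⟨l, hf, hs⟩ := h
  obtain ⟨m₁, m₂, rfl, h1, h2⟩ := forall2_split hf
  obtain ⟨v₁, v₂, rfl, s1, s2⟩ := List.append_sublist_iff.1 hs
  exact ⟨v₁, v₂, rfl, List.sublistForall₂_iff.2 ⟨m₁, h1, s1⟩,
    List.sublistForall₂_iff.2 ⟨m₂, h2, s2⟩⟩

lemma hig_append {a b c d : List A} (h1 : Hig a b) (h2 : Hig c d) : Hig (a ++ c) (b ++ d) := by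
  rw [Hig, List.sublistForall₂_iff] at h1 h2 ⊢
  obtain ⟨l1, f1, s1⟩ := h1
  obtain ⟨l2, f2, s2⟩ := h2
  exact ⟨l1 ++ l2, List.rel_append f1 f2, s1.append s2⟩

lemma mem_conc {X Y : Set (List A)} {w : List A} :
    w ∈ conc X Y ↔ ∃ x ∈ X, ∃ y ∈ Y, x ++ y = w := Set.mem_image2

lemma conc_mem {X Y : Set (List A)} {x y : List A} (hx : x ∈ X) (hy : y ∈ Y) :
    x ++ y ∈ conc X Y := ⟨x, hx, y, hy, rfl⟩

lemma conc_assoc (X Y Z : Set (List A)) : conc (conc X Y) Z = conc X (conc Y Z) :=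
  Set.image2_assoc (fun a b c => List.append_assoc a b c)

lemma conc_final {X Y : Set (List A)} (hX : IsFinal X) (hY : IsFinal Y) :
    IsFinal (conc X Y) := by
  intro a b hab ha
  obtain ⟨x, hx, y, hy, rfl⟩ := mem_conc.1 ha
  obtain ⟨b₁, b₂, rfl, h1, h2⟩ := hig_split hab
  exact conc_mem (hX h1 hx) (hY h2 hy)

lemma final_univ : IsFinal (Set.univ : Set (List A)) := fun _ _ _ _ => trivial

lemma final_of_nil_mem {F : Set (List A)} (hF : IsFinal F) (h : [] ∈ F) : F = Set.univ :=
  Set.eq_univ_of_forall fun x => hF (hig_nil x) h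

lemma conc_univ {F : Set (List A)} (hF : IsFinal F) : conc F Set.univ = F := by
  apply Set.Subset.antisymm
  · rintro w hw
    obtain ⟨x, hx, y, -, rfl⟩ := mem_conc.1 hw
    exact hF (hig_prefix x y) hx
  · intro w hw
    exact (List.append_nil w) ▸ conc_mem hw (Set.mem_univ ([] : List A))

lemma univ_conc {F : Set (List A)} (hF : IsFinal F) : conc Set.univ F = F := by
  apply Set.Subset.antisymm
  · rintro w hw
    obtain ⟨x, -, y, hy, rfl⟩ := mem_conc.1 hw
    exact hF (hig_suffix x y) hy
  · intro w hw
    exact conc_mem (Set.mem_univ ([] : List A)) hw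

/-- norm: minimal length of a word in `F`. -/
noncomputable def nrm (F : Set (List A)) : ℕ := sInf (List.length '' F)

lemma nrm_le {F : Set (List A)} {w : List A} (h : w ∈ F) : nrm F ≤ w.length :=
  Nat.sInf_le ⟨w, h, rfl⟩

lemma exists_nrm {F : Set (List A)} (h : F.Nonempty) : ∃ w ∈ F, w.length = nrm F :=
  Nat.sInf_mem (h.image _)

lemma nrm_zero_mem {F : Set (List A)} (h : F.Nonempty) (h0 : nrm F = 0) : [] ∈ F := by
  obtain ⟨w, hw, hl⟩ := exists_nrm h
  have : w = [] := List.length_eq_zero_iff.1 (by omega)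
  exact this ▸ hw

lemma nrm_conc {X Y : Set (List A)} (hX : X.Nonempty) (hY : Y.Nonempty) :
    nrm (conc X Y) = nrm X + nrm Y := by
  apply le_antisymm
  · obtain ⟨x, hx, hxl⟩ := exists_nrm hX
    obtain ⟨y, hy, hyl⟩ := exists_nrm hY
    have := nrm_le (conc_mem hx hy)
    simpa [List.length_append, hxl, hyl] using this
  · obtain ⟨w, hw, hl⟩ := exists_nrm (hX.image2 (f := (· ++ ·)) hY)
    obtain ⟨x, hx, y, hy, rfl⟩ := mem_conc.1 hw
    have h1 := nrm_le hx
    have h2 := nrm_le hy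
    have hl' : (x ++ y).length = nrm (conc X Y) := hl
    rw [← hl', List.length_append]
    omega

lemma split_ge {z₀ x z y : List A} (h : z₀ ++ x = z ++ y) (hl : z₀.length ≤ z.length) :
    ∃ t, z = z₀ ++ t ∧ x = t ++ y := by
  rcases List.append_eq_append_iff.1 h with ⟨a', h1, h2⟩ | ⟨c', h1, h2⟩
  · exact ⟨a', h1, h2⟩
  · have : c' = [] := by
      have := congrArg List.length h1
      simp only [List.length_append] at this
      exact List.length_eq_zero_iff.1 (by omega)
    subst this
    simp only [List.append_nil] at h1
    refine ⟨[], by simp [h1], by simpa using h2.symm⟩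

lemma split_le {a b c d : List A} (h : a ++ b = c ++ d) (hl : b.length ≤ d.length) :
    ∃ t, a = c ++ t ∧ d = t ++ b := by
  apply split_ge h.symm
  have := congrArg List.length h
  simp only [List.length_append] at this
  omega

lemma conc_left_cancel_sub {Z X Y : Set (List A)} (hZ : Z.Nonempty) (hY : IsFinal Y)
    (h : conc Z X ⊆ conc Z Y) : X ⊆ Y := by
  obtain ⟨z₀, hz₀, hz₀l⟩ := exists_nrm hZ
  intro x hx
  obtain ⟨z, hz, y, hy, heq⟩ := mem_conc.1 (h (conc_mem hz₀ hx))
  obtain ⟨t, -, hxt⟩ := split_ge heq.symm (by rw [hz₀l]; exact nrm_le hz)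
  exact hY (hxt ▸ hig_suffix t y) hy

lemma conc_left_cancel {Z X Y : Set (List A)} (hZ : Z.Nonempty) (hX : IsFinal X)
    (hY : IsFinal Y) (h : conc Z X = conc Z Y) : X = Y :=
  Set.Subset.antisymm (conc_left_cancel_sub hZ hY h.le) (conc_left_cancel_sub hZ hX h.ge)

lemma equidiv_aux {X Y Z W : Set (List A)} (hXf : IsFinal X) (hYf : IsFinal Y)
    (hZf : IsFinal Z) (hWf : IsFinal W) (hXn : X.Nonempty) (hYn : Y.Nonempty) (hZn : Z.Nonempty)
    (hWn : W.Nonempty) (heq : conc X Y = conc Z W) (hn : nrm Z ≤ nrm X) :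
    ∃ T, IsFinal T ∧ T.Nonempty ∧ X = conc Z T ∧ W = conc T Y := by
  obtain ⟨z₀, hz₀, hz₀l⟩ := exists_nrm hZn
  obtain ⟨y₀, hy₀, hy₀l⟩ := exists_nrm hYn
  set T : Set (List A) := {t | ∀ y ∈ Y, t ++ y ∈ W} with hT
  have hTf : IsFinal T := by
    intro a b hab ha y hy
    exact hWf (hig_append hab (hig_refl y)) (ha y hy)
  have claim1 : ∀ t, z₀ ++ t ∈ X → t ∈ T := by
    intro t hzt y' hy'
    have h1 : (z₀ ++ t) ++ y' ∈ conc Z W := heq ▸ conc_mem hzt hy'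
    obtain ⟨z, hz, w', hw', heq2⟩ := mem_conc.1 h1
    have heq3 : z₀ ++ (t ++ y') = z ++ w' := by rw [← List.append_assoc]; exact heq2.symm
    obtain ⟨s, -, hsw⟩ := split_ge heq3 (by rw [hz₀l]; exact nrm_le hz)
    exact hWf (hsw ▸ hig_suffix s w') hw'
  have claim2 : ∀ w ∈ W, ∃ t ∈ T, ∃ y ∈ Y, t ++ y = w := by
    intro w hw
    have h1 : z₀ ++ w ∈ conc X Y := by rw [heq]; exact conc_mem hz₀ hw
    obtain ⟨x, hx, y, hy, heq2⟩ := mem_conc.1 h1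
    obtain ⟨t, hxt, hwt⟩ := split_ge heq2.symm (by rw [hz₀l]; exact le_trans hn (nrm_le hx))
    exact ⟨t, claim1 t (hxt ▸ hx), y, hy, hwt.symm⟩
  have hTY : conc T Y = W := by
    apply Set.Subset.antisymm
    · rintro w hw
      obtain ⟨t, ht, y, hy, rfl⟩ := mem_conc.1 hw
      exact ht y hy
    · intro w hw
      obtain ⟨t, ht, y, hy, hty⟩ := claim2 w hw
      exact hty ▸ conc_mem ht hy
  have hTn : T.Nonempty := by
    obtain ⟨w, hw⟩ := hWn
    obtain ⟨t, ht, -⟩ := claim2 w hw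
    exact ⟨t, ht⟩
  have hZT : conc Z T ⊆ X := by
    rintro u hu
    obtain ⟨z, hz, t, ht, rfl⟩ := mem_conc.1 hu
    have h1 : (z ++ t) ++ y₀ ∈ conc X Y := by
      rw [heq, List.append_assoc]
      exact conc_mem hz (ht y₀ hy₀)
    obtain ⟨x, hx, y, hy, heq2⟩ := mem_conc.1 h1
    obtain ⟨s, hzt, -⟩ := split_le heq2.symm (by rw [hy₀l]; exact nrm_le hy)
    exact hXf (by rw [hzt]; exact hig_prefix x s) hx
  have hXZT : X ⊆ conc Z T := by
    intro x hx
    have hU : conc (conc Z T) Y = conc X Y := by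
      rw [conc_assoc, hTY, ← heq]
    have h1 : x ++ y₀ ∈ conc (conc Z T) Y := hU ▸ conc_mem hx hy₀
    obtain ⟨u, hu, y, hy, heq2⟩ := mem_conc.1 h1
    obtain ⟨s, hxs, -⟩ := split_le heq2.symm (by rw [hy₀l]; exact nrm_le hy)
    exact conc_final hZf hTf (by rw [hxs]; exact hig_prefix u s) hu
  exact ⟨T, hTf, hTn, Set.Subset.antisymm hXZT hZT, hTY.symm⟩

end Aux

section Aux2

variable {A : Type*} [PartialOrder A]

lemma equidiv {X Y Z W : Set (List A)} (hXf : IsFinal X) (hYf : IsFinal Y)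
    (hZf : IsFinal Z) (hWf : IsFinal W) (hXn : X.Nonempty) (hYn : Y.Nonempty)
    (hZn : Z.Nonempty) (hWn : W.Nonempty) (heq : conc X Y = conc Z W) :
    ∃ T, IsFinal T ∧ T.Nonempty ∧
      ((X = conc Z T ∧ W = conc T Y) ∨ (Z = conc X T ∧ Y = conc T W)) := by
  rcases le_total (nrm Z) (nrm X) with hn | hn
  · obtain ⟨T, h1, h2, h3, h4⟩ := equidiv_aux hXf hYf hZf hWf hXn hYn hZn hWn heq hn
    exact ⟨T, h1, h2, Or.inl ⟨h3, h4⟩⟩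
  · obtain ⟨T, h1, h2, h3, h4⟩ := equidiv_aux hZf hWf hXf hYf hZn hWn hXn hYn heq.symm hn
    exact ⟨T, h1, h2, Or.inr ⟨h3, h4⟩⟩

lemma prod_final {l : List (Set (List A))} (h : ∀ G ∈ l, IsFinal G) :
    IsFinal (l.foldr conc Set.univ) := by
  induction l with
  | nil => exact final_univ
  | cons a l ih =>
    exact conc_final (h a List.mem_cons_self) (ih fun G hG => h G (List.mem_cons_of_mem a hG))

lemma prod_nonempty {l : List (Set (List A))} (h : ∀ G ∈ l, G.Nonempty) :
    (l.foldr conc Set.univ).Nonempty := by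
  induction l with
  | nil => exact ⟨[], Set.mem_univ []⟩
  | cons a l ih =>
    exact Set.Nonempty.image2 (h a List.mem_cons_self)
      (ih fun G hG => h G (List.mem_cons_of_mem a hG))

lemma prod_append {l₁ l₂ : List (Set (List A))} (h : IsFinal (l₂.foldr conc Set.univ)) :
    (l₁ ++ l₂).foldr conc Set.univ =
      conc (l₁.foldr conc Set.univ) (l₂.foldr conc Set.univ) := by
  induction l₁ with
  | nil => simp [univ_conc h]
  | cons a l ih => simp only [List.cons_append, List.foldr_cons, ih, conc_assoc]

lemma uniq_fact : ∀ l₁ l₂ : List (Set (List A)),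
    (∀ G ∈ l₁, IsFinal G ∧ G.Nonempty ∧ IrredFinal G) →
    (∀ G ∈ l₂, IsFinal G ∧ G.Nonempty ∧ IrredFinal G) →
    l₁.foldr conc Set.univ = l₂.foldr conc Set.univ → l₁ = l₂ := by
  have key : ∀ (H P : Set (List A)), IsFinal H → IrredFinal H →
      Set.univ = conc H P → False := by
    intro H P hHf hHi h
    have h0 : ([] : List A) ∈ conc H P := h ▸ trivial
    obtain ⟨x, hx, y, hy, hxy⟩ := mem_conc.1 h0
    have hx0 : x = [] := (List.append_eq_nil_iff.1 hxy).1
    exact hHi.1 (final_of_nil_mem hHf (hx0 ▸ hx))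
  intro l₁
  induction l₁ with
  | nil =>
    intro l₂ h1 h2 h
    cases l₂ with
    | nil => rfl
    | cons H s =>
      exact (key H (s.foldr conc Set.univ) (h2 H List.mem_cons_self).1
          (h2 H List.mem_cons_self).2.2 h).elim
  | cons G r ih =>
    intro l₂ h1 h2 h
    cases l₂ with
    | nil =>
      exact (key G (r.foldr conc Set.univ) (h1 G List.mem_cons_self).1
          (h1 G List.mem_cons_self).2.2 h.symm).elim
    | cons H s =>
      obtain ⟨hGf, hGn, hGi⟩ := h1 G List.mem_cons_self
      obtain ⟨hHf, hHn, hHi⟩ := h2 H List.mem_cons_self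
      have hr : ∀ G' ∈ r, IsFinal G' ∧ G'.Nonempty ∧ IrredFinal G' :=
        fun G' hG' => h1 G' (List.mem_cons_of_mem G hG')
      have hs : ∀ G' ∈ s, IsFinal G' ∧ G'.Nonempty ∧ IrredFinal G' :=
        fun G' hG' => h2 G' (List.mem_cons_of_mem H hG')
      have hPrf : IsFinal (r.foldr conc Set.univ) := prod_final fun G' hG' => (hr G' hG').1
      have hPrn : (r.foldr conc Set.univ).Nonempty := prod_nonempty fun G' hG' => (hr G' hG').2.1
      have hPsf : IsFinal (s.foldr conc Set.univ) := prod_final fun G' hG' => (hs G' hG').1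
      have hPsn : (s.foldr conc Set.univ).Nonempty := prod_nonempty fun G' hG' => (hs G' hG').2.1
      simp only [List.foldr_cons] at h
      obtain ⟨T, hTf, hTn, hcase⟩ :=
        equidiv hGf hPrf hHf hPsf hGn hPrn hHn hPsn h
      rcases hcase with ⟨hGT, hPs⟩ | ⟨hHT, hPr⟩
      · rcases hGi.2 H T hHf hTf hGT with hGH | hGT2
        · -- G = H
          have hTuniv : T = Set.univ := by
            apply conc_left_cancel hHn hTf final_univ
            rw [conc_univ hHf, ← hGT, hGH]
          have : r.foldr conc Set.univ = s.foldr conc Set.univ := by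
            rw [hPs, hTuniv, univ_conc hPrf]
          rw [hGH, ih s hr hs this]
        · -- G = T : G = conc H G, contradiction
          exfalso
          have h2' : nrm G = nrm H + nrm G := by
            conv_lhs => rw [hGT, ← hGT2]
            exact nrm_conc hHn hGn
          have : nrm H = 0 := by omega
          exact hHi.1 (final_of_nil_mem hHf (nrm_zero_mem hHn this))
      · rcases hHi.2 G T hGf hTf hHT with hHG | hHT2
        · have hTuniv : T = Set.univ := by
            apply conc_left_cancel hGn hTf final_univ
            rw [conc_univ hGf, ← hHT, hHG]
          have : r.foldr conc Set.univ = s.foldr conc Set.univ := by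
            rw [hPr, hTuniv, univ_conc hPsf]
          rw [hHG, ih s hr hs this]
        · exfalso
          have h2' : nrm H = nrm G + nrm H := by
            conv_lhs => rw [hHT, ← hHT2]
            exact nrm_conc hGn hHn
          have : nrm G = 0 := by omega
          exact hGi.1 (final_of_nil_mem hGf (nrm_zero_mem hGn this))

lemma exists_fact : ∀ n : ℕ, ∀ F : Set (List A), IsFinal F → F.Nonempty → nrm F = n →
    ∃ l : List (Set (List A)),
      (∀ G ∈ l, IsFinal G ∧ G.Nonempty ∧ IrredFinal G) ∧
      l.foldr conc Set.univ = F := by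
  intro n
  induction n using Nat.strong_induction_on with
  | _ n ih =>
    intro F hF hne hn
    by_cases h0 : ([] : List A) ∈ F
    · exact ⟨[], by simp, (final_of_nil_mem hF h0).symm⟩
    · have hFu : F ≠ Set.univ := fun h => h0 (h ▸ trivial)
      by_cases hirr : IrredFinal F
      · refine ⟨[F], ?_, ?_⟩
        · intro G hG
          rw [List.mem_singleton] at hG
          exact hG ▸ ⟨hF, hne, hirr⟩
        · simp only [List.foldr_cons, List.foldr_nil]
          exact conc_univ hF
      · rw [IrredFinal] at hirr
        push_neg at hirr
        obtain ⟨X, Y, hXf, hYf, hFXY, hFX, hFY⟩ := hirr hFu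
        have hconc : (conc X Y).Nonempty := hFXY ▸ hne
        obtain ⟨w, hw⟩ := hconc
        obtain ⟨x, hx, y, hy, -⟩ := mem_conc.1 hw
        have hXn : X.Nonempty := ⟨x, hx⟩
        have hYn : Y.Nonempty := ⟨y, hy⟩
        have hX1 : 1 ≤ nrm X := by
          by_contra hc
          have : nrm X = 0 := by omega
          have : X = Set.univ := final_of_nil_mem hXf (nrm_zero_mem hXn this)
          exact hFY (by rw [hFXY, this, univ_conc hYf])
        have hY1 : 1 ≤ nrm Y := by
          by_contra hc
          have : nrm Y = 0 := by omega
          have : Y = Set.univ := final_of_nil_mem hYf (nrm_zero_mem hYn this)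
          exact hFX (by rw [hFXY, this, conc_univ hXf])
        have hadd : nrm X + nrm Y = n := by rw [← hn, hFXY, nrm_conc hXn hYn]
        obtain ⟨lx, hlx, hlxP⟩ := ih (nrm X) (by omega) X hXf hXn rfl
        obtain ⟨ly, hly, hlyP⟩ := ih (nrm Y) (by omega) Y hYf hYn rfl
        refine ⟨lx ++ ly, ?_, ?_⟩
        · intro G hG
          rcases List.mem_append.1 hG with h | h
          · exact hlx G h
          · exact hly G h
        · rw [prod_append (hlyP ▸ hYf), hlxP, hlyP, hFXY]

end Aux2


/-- Freeness of the monoid of non-empty final segments, expressed as unique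
factorization into irreducibles (the neutral element being `A* = Set.univ`). -/
theorem stmt17 {A : Type*} [PartialOrder A] (F : Set (List A))
    (hF : IsFinal F) (hne : F.Nonempty) :
    ∃! l : List (Set (List A)),
      (∀ G ∈ l, IsFinal G ∧ G.Nonempty ∧ IrredFinal G) ∧
      l.foldr conc Set.univ = F := by
  obtain ⟨l, hl1, hl2⟩ := exists_fact (nrm F) F hF hne rfl
  exact ⟨l, ⟨hl1, hl2⟩, fun l' hl' => uniq_fact l' l hl'.1 hl1 (by rw [hl'.2, hl2])⟩
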